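/- Let φ be the substitution on {0,1} with φ(0) = 1, φ(1) = 100, and let φ^∞(1) = lim_{n→∞} φ^n(1) be its infinite fixed point. The Lyndon system M(φ^∞(1)) associated to the alternate Lyndon word φ^∞(1) has topological entropy zero. -/

import Mathlib

open Filter Topology

/-- Alternate (Ito–Sadahiro) strict order on infinite sequences (0-indexed: entry `i`
is the `(i+1)`-th letter `x_{i+1}` of the paper). `altLt x y` iff at the first index
where they differ the comparison alternates with the parity of the index:
`(-1)^k (x_k - y_k) < 0` in 1-based indexing. -/
def altLt (x y : ℕ → ℕ) : Prop :=
  ∃ k : ℕ, (∀ i < k, x i = y i) ∧ (if Even k then y k < x k else x k < y k)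

def altLe (x y : ℕ → ℕ) : Prop := x = y ∨ altLt x y

def shiftSeq (x : ℕ → ℕ) (k : ℕ) : ℕ → ℕ := fun i => x (k + i)

/-- An alternate Lyndon word: smaller (in the alternate order) than all of its shifts. -/
def IsAltLyndon (d : ℕ → ℕ) : Prop := ∀ k : ℕ, altLe d (shiftSeq d k)

/-- The Lyndon system associated to `d`: sequences over the alphabet `{0, …, d_1}`
all of whose shifts dominate `d` in the alternate order. -/
def LyndonSystem (d : ℕ → ℕ) : Set (ℕ → ℕ) :=
  {x | (∀ i, x i ≤ d 0) ∧ ∀ k : ℕ, altLe d (shiftSeq x k)}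

def IsFactorOf (w : List ℕ) (x : ℕ → ℕ) : Prop :=
  ∃ k : ℕ, w = (List.range w.length).map (fun i => x (k + i))

/-- The language of the Lyndon system: finite factors of its elements. -/
def LyndonLang (d : ℕ → ℕ) : Set (List ℕ) :=
  {w | ∃ x ∈ LyndonSystem d, IsFactorOf w x}

/-- `Hword d n` is the number of words of length `n` in the language `L_M`. -/
noncomputable def Hword (d : ℕ → ℕ) (n : ℕ) : ℕ :=
  Set.ncard {w : List ℕ | w ∈ LyndonLang d ∧ w.length = n}

/-- The topological entropy of the Lyndon system of `d` equals `h`,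
i.e. `lim_{n→∞} (log H_n)/n = h`. -/
def EntropyIs (d : ℕ → ℕ) (h : ℝ) : Prop :=
  Filter.Tendsto (fun n : ℕ => Real.log (Hword d n) / n) Filter.atTop (nhds h)

/-- The substitution `φ` on letters: `φ(0) = 1`, `φ(1) = 100`. -/
def phiL (a : ℕ) : List ℕ := if a = 0 then [1] else [1, 0, 0]
/-- `φ` extended to words. -/
def phiW (w : List ℕ) : List ℕ := w.flatMap phiL
/-- `uW n = φ^n(1)`. -/
def uW (n : ℕ) : List ℕ := phiW^[n] [1]
/-- The infinite fixed point `φ^∞(1)` (each `uW n` is a prefix of `uW (n+1)`,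
and `|uW (i+1)| > i`, so the definition below gives the limit word). -/
def phiInf : ℕ → ℕ := fun i => (uW (i + 1)).getD i 0

/-! ### Section 1 : basic word lemmas -/

lemma phiL_length (a : ℕ) : (phiL a).length = if a = 0 then 1 else 3 := by
  unfold phiL; split <;> rfl

lemma phiL_length_pos (a : ℕ) : 0 < (phiL a).length := by
  rw [phiL_length]; split <;> omega

lemma phiL_length_odd (a : ℕ) : ¬ Even (phiL a).length := by
  rw [phiL_length]; split <;> decide

lemma phiL_getD_zero (a : ℕ) : (phiL a).getD 0 0 = 1 := by
  unfold phiL; split <;> rfl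

lemma phiW_append (u v : List ℕ) : phiW (u ++ v) = phiW u ++ phiW v :=
  List.flatMap_append

lemma phiW_cons (a : ℕ) (u : List ℕ) : phiW (a :: u) = phiL a ++ phiW u := rfl

lemma phiW_nil : phiW [] = [] := rfl

lemma phiW_prefix {u v : List ℕ} (h : u <+: v) : phiW u <+: phiW v := by
  obtain ⟨t, rfl⟩ := h
  rw [phiW_append]; exact List.prefix_append _ _

lemma length_le_phiW (u : List ℕ) : u.length ≤ (phiW u).length := by
  induction u with
  | nil => simp [phiW]
  | cons a t ih =>
    rw [phiW_cons, List.length_append, List.length_cons]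
    have := phiL_length_pos a
    omega

lemma phiW_length (u : List ℕ) (hu : ∀ a ∈ u, a ≤ 1) :
    (phiW u).length = u.length + 2 * u.count 1 := by
  induction u with
  | nil => simp [phiW]
  | cons a t ih =>
    rw [phiW_cons, List.length_append, List.length_cons,
      ih (fun b hb => hu b (List.mem_cons_of_mem _ hb))]
    have ha : a ≤ 1 := hu a List.mem_cons_self
    interval_cases a <;> simp [phiL_length, List.count_cons] <;> ring

lemma phiW_count_one (u : List ℕ) : (phiW u).count 1 = u.length := by
  induction u with
  | nil => simp [phiW]
  | cons a t ih =>
    rw [phiW_cons, List.count_append, ih, List.length_cons]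
    have : (phiL a).count 1 = 1 := by unfold phiL; split <;> rfl
    omega

lemma getD_prefix {u v : List ℕ} (h : u <+: v) {i : ℕ} (hi : i < u.length) :
    v.getD i 0 = u.getD i 0 := by
  obtain ⟨t, rfl⟩ := h
  rw [List.getD_append _ _ _ _ hi]

/-! ### Section 2 : the fixed point -/

lemma uW_succ (n : ℕ) : uW (n + 1) = phiW (uW n) := by
  unfold uW; rw [Function.iterate_succ_apply']

lemma uW_head (n : ℕ) : ∃ t, uW n = 1 :: t := by
  induction n with
  | zero => exact ⟨[], rfl⟩
  | succ n ih =>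
    obtain ⟨t, ht⟩ := ih
    refine ⟨?_, ?_⟩
    · exact (phiL 1).tail ++ phiW t
    · rw [uW_succ, ht, phiW_cons]; rfl

lemma uW_length (n : ℕ) : n < (uW n).length := by
  induction n with
  | zero => simp [uW]
  | succ n ih =>
    obtain ⟨t, ht⟩ := uW_head n
    rw [uW_succ, ht, phiW_cons]
    have := length_le_phiW t
    have h1 : (phiL 1).length = 3 := rfl
    rw [List.length_append, h1]
    have : t.length + 1 = (uW n).length := by rw [ht]; rfl
    omega

lemma uW_prefix_succ (n : ℕ) : uW n <+: uW (n + 1) := by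
  induction n with
  | zero => exact ⟨[0, 0], rfl⟩
  | succ n ih => rw [uW_succ, uW_succ (n+1)]; exact phiW_prefix ih

lemma uW_prefix {n m : ℕ} (h : n ≤ m) : uW n <+: uW m := by
  induction m with
  | zero => rw [Nat.le_zero.mp h]
  | succ m ih =>
    rcases Nat.lt_or_ge n (m+1) with h' | h'
    · exact (ih (by omega)).trans (uW_prefix_succ m)
    · have : n = m + 1 := by omega
      rw [this]

lemma phiInf_eq {i m : ℕ} (h : i + 1 ≤ m) : phiInf i = (uW m).getD i 0 := by
  have hi : i < (uW (i+1)).length := lt_trans (Nat.lt_succ_self i) (uW_length (i+1))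
  exact (getD_prefix (uW_prefix h) hi).symm

lemma uW_binary (n : ℕ) : ∀ a ∈ uW n, a ≤ 1 := by
  induction n with
  | zero => intro a ha; simp [uW] at ha; omega
  | succ n ih =>
    rw [uW_succ]
    intro a ha
    unfold phiW at ha
    rw [List.mem_flatMap] at ha
    obtain ⟨b, _, hb2⟩ := ha
    unfold phiL at hb2
    split at hb2 <;> simp at hb2 <;> omega

lemma phiInf_binary (i : ℕ) : phiInf i ≤ 1 := by
  unfold phiInf
  rcases Nat.lt_or_ge i (uW (i+1)).length with h | h
  · rw [List.getD_eq_getElem _ 0 h]; exact uW_binary (i+1) _ (List.getElem_mem h)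
  · rw [List.getD_eq_default _ _ h]; omega

lemma phiInf_0 : phiInf 0 = 1 := by decide
lemma phiInf_1 : phiInf 1 = 0 := by decide
lemma phiInf_2 : phiInf 2 = 0 := by decide
lemma phiInf_3 : phiInf 3 = 1 := by decide

/-! ### Section 3 : substitution on infinite sequences -/

/-- `φ` applied to an infinite sequence, defined through prefixes. -/
def phiSeq (z : ℕ → ℕ) (i : ℕ) : ℕ := (phiW ((List.range (i+1)).map z)).getD i 0

/-- position of the start of the `k`-th block in `phiSeq z`. -/
def Pz (z : ℕ → ℕ) (k : ℕ) : ℕ := (phiW ((List.range k).map z)).length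

lemma Pz_zero (z : ℕ → ℕ) : Pz z 0 = 0 := rfl

lemma Pz_succ (z : ℕ → ℕ) (k : ℕ) :
    Pz z (k+1) = Pz z k + (phiL (z k)).length := by
  unfold Pz
  rw [List.range_succ, List.map_append, phiW_append, List.length_append]
  simp [phiW]

lemma Pz_lt_succ (z : ℕ → ℕ) (k : ℕ) : Pz z k < Pz z (k+1) := by
  rw [Pz_succ]; have := phiL_length_pos (z k); omega

lemma Pz_ge (z : ℕ → ℕ) (k : ℕ) : k ≤ Pz z k := by
  induction k with
  | zero => simp [Pz_zero]
  | succ k ih => have := Pz_lt_succ z k; omega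

lemma Pz_add_ge (z : ℕ → ℕ) (k j : ℕ) : Pz z k + j ≤ Pz z (k + j) := by
  induction j with
  | zero => simp
  | succ j ih =>
    have h1 := Pz_lt_succ z (k + j)
    have h2 : k + (j + 1) = (k + j) + 1 := by omega
    rw [h2]; omega

lemma Pz_mono (z : ℕ → ℕ) {k m : ℕ} (h : k ≤ m) : Pz z k ≤ Pz z m := by
  have h1 := Pz_add_ge z k (m - k)
  have h2 : k + (m - k) = m := by omega
  rw [h2] at h1; omega

lemma Pz_congr {u v : ℕ → ℕ} {k : ℕ} (h : ∀ i < k, u i = v i) : Pz u k = Pz v k := by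
  unfold Pz
  rw [List.map_congr_left (fun i hi => h i (List.mem_range.mp hi))]

lemma phiW_range_prefix (z : ℕ → ℕ) {k m : ℕ} (h : k ≤ m) :
    phiW ((List.range k).map z) <+: phiW ((List.range m).map z) := by
  apply phiW_prefix
  have h2 : List.range k <+: List.range m := by
    rw [show m = k + (m - k) by omega, List.range_add]
    exact List.prefix_append _ _
  obtain ⟨t, ht⟩ := h2
  exact ⟨t.map z, by rw [← List.map_append, ht]⟩

/-- key: `phiSeq z i` can be computed from any sufficiently long prefix. -/
lemma phiSeq_spec (z : ℕ → ℕ) {k i : ℕ} (hi : i < Pz z k) :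
    phiSeq z i = (phiW ((List.range k).map z)).getD i 0 := by
  unfold phiSeq
  have h1 : i < (phiW ((List.range (i+1)).map z)).length :=
    lt_of_lt_of_le (Nat.lt_succ_self i) (Pz_ge z (i+1))
  rcases le_total (i+1) k with h | h
  · exact (getD_prefix (phiW_range_prefix z h) h1).symm
  · exact getD_prefix (phiW_range_prefix z h) hi

lemma phiSeq_block (z : ℕ → ℕ) {k o : ℕ} (ho : o < (phiL (z k)).length) :
    phiSeq z (Pz z k + o) = (phiL (z k)).getD o 0 := by
  have h1 : Pz z k + o < Pz z (k+1) := by rw [Pz_succ]; omega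
  rw [phiSeq_spec z h1]
  unfold Pz
  rw [List.range_succ, List.map_append, phiW_append]
  rw [List.getD_append_right _ _ _ _ (Nat.le_add_right _ _)]
  simp only [Nat.add_sub_cancel_left]
  simp [phiW]

lemma phiSeq_blockStart (z : ℕ → ℕ) (k : ℕ) : phiSeq z (Pz z k) = 1 := by
  have h := phiSeq_block z (k := k) (o := 0) (phiL_length_pos (z k))
  rw [phiL_getD_zero, Nat.add_zero] at h
  exact h

lemma Pz_parity (z : ℕ → ℕ) (k : ℕ) : Even (Pz z k) ↔ Even k := by
  induction k with
  | zero => simp [Pz_zero]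
  | succ k ih =>
    rw [Pz_succ]
    have hodd := phiL_length_odd (z k)
    rw [Nat.even_add, Nat.even_add_one, ih]
    tauto

lemma phiSeq_shift (z : ℕ → ℕ) (k i : ℕ) :
    phiSeq (shiftSeq z k) i = phiSeq z (Pz z k + i) := by
  have h1 : Pz z k + i < Pz z (k + (i+1)) := by have := Pz_add_ge z k (i+1); omega
  rw [phiSeq_spec z h1]
  rw [List.range_add, List.map_append, phiW_append]
  have hA : (phiW ((List.range k).map z)).length = Pz z k := rfl
  rw [List.getD_append_right _ _ _ _ (by rw [hA]; omega)]
  rw [hA]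
  simp only [Nat.add_sub_cancel_left]
  unfold phiSeq
  congr 2
  rw [List.map_map]
  rfl

/-! ### Section 3b : `phiInf` is a fixed point of `phiSeq` -/

lemma range_map_phiInf (i m : ℕ) (h : i ≤ m) :
    (List.range i).map phiInf = (uW m).take i := by
  apply List.ext_getElem
  · rw [List.length_map, List.length_range, List.length_take]
    have := uW_length m
    omega
  · intro j h1 h2
    rw [List.length_map, List.length_range] at h1
    rw [List.getElem_map, List.getElem_range, List.getElem_take]
    have hj : j < (uW m).length := by have := uW_length m; omega
    rw [phiInf_eq (show j + 1 ≤ m by omega), List.getD_eq_getElem _ 0 hj]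

lemma phiSeq_phiInf (i : ℕ) : phiSeq phiInf i = phiInf i := by
  unfold phiSeq
  rw [range_map_phiInf (i+1) (i+1) (le_refl _)]
  have hpre : phiW ((uW (i+1)).take (i+1)) <+: uW (i + 1 + 1) := by
    have h := phiW_prefix (List.take_prefix (i+1) (uW (i+1)))
    rwa [← uW_succ] at h
  have hlen : i < (phiW ((uW (i+1)).take (i+1))).length := by
    have h1 := length_le_phiW ((uW (i+1)).take (i+1))
    rw [List.length_take] at h1
    have := uW_length (i+1)
    omega
  rw [← getD_prefix hpre hlen, ← phiInf_eq (show i + 1 ≤ i + 1 + 1 by omega)]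

/-! ### Section 4 : order lemmas -/

lemma altLt_asymm {u v : ℕ → ℕ} (h1 : altLt u v) (h2 : altLt v u) : False := by
  obtain ⟨k1, ha1, hc1⟩ := h1
  obtain ⟨k2, ha2, hc2⟩ := h2
  rcases lt_trichotomy k1 k2 with h | h | h
  · have he := ha2 k1 h
    split at hc1 <;> omega
  · subst h
    by_cases hp : Even k1
    · rw [if_pos hp] at hc1 hc2; omega
    · rw [if_neg hp] at hc1 hc2; omega
  · have he := ha1 k2 h
    split at hc2 <;> omega

lemma altLt_irrefl (u : ℕ → ℕ) : ¬ altLt u u := by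
  rintro ⟨k, _, hc⟩
  split at hc <;> omega

/-- if `u` is not `⪰ d` then `u ≺ d`. -/
lemma altLt_of_not_altLe {u d : ℕ → ℕ} (h : ¬ altLe d u) : altLt u d := by
  have hne : u ≠ d := fun he => h (Or.inl he.symm)
  have hlt : ¬ altLt d u := fun hl => h (Or.inr hl)
  -- least index where they differ
  have hex : ∃ k, u k ≠ d k := by
    by_contra hc
    push_neg at hc
    exact hne (funext hc)
  classical
  let k := Nat.find hex
  have hk : u k ≠ d k := Nat.find_spec hex
  have hmin : ∀ i < k, u i = d i := fun i hi => by
    by_contra hc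
    exact absurd (Nat.find_min hex hi) (by simpa using hc)
  refine ⟨k, hmin, ?_⟩
  have hnc : ¬ (if Even k then u k < d k else d k < u k) := by
    intro hcond
    exact hlt ⟨k, fun i hi => (hmin i hi).symm, hcond⟩
  by_cases hp : Even k
  · rw [if_pos hp] at hnc ⊢; omega
  · rw [if_neg hp] at hnc ⊢; omega

/-! ### Section 5 : `phiSeq` is compatible with the alternate order -/

lemma altLt_phiSeq {u : ℕ → ℕ} (hu : ∀ i, u i ≤ 1) (h : altLt u phiInf) :
    altLt (phiSeq u) phiInf := by
  obtain ⟨k, ha, hc⟩ := h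
  have hP : Pz u k = Pz phiInf k := Pz_congr ha
  have hagree : ∀ i < Pz u k + 1, phiSeq u i = phiInf i := by
    intro i hi
    rcases Nat.lt_or_ge i (Pz u k) with h' | h'
    · rw [phiSeq_spec u h', ← phiSeq_phiInf i, phiSeq_spec phiInf (hP ▸ h')]
      congr 2
      exact List.map_congr_left (fun j hj => ha j (List.mem_range.mp hj))
    · have hi' : i = Pz u k := by omega
      subst hi'
      rw [phiSeq_blockStart u k, ← phiSeq_phiInf, hP, phiSeq_blockStart]
  by_cases hp : Even k
  · -- here phiInf k < u k, so phiInf k = 0, u k = 1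
    rw [if_pos hp] at hc
    have hu1 : u k = 1 := by have := hu k; omega
    have hd0 : phiInf k = 0 := by omega
    refine ⟨Pz u k + 1, hagree, ?_⟩
    have hj : ¬ Even (Pz u k + 1) := by
      rw [Nat.even_add_one, not_not, Pz_parity]; exact hp
    rw [if_neg hj]
    have hval_u : phiSeq u (Pz u k + 1) = 0 := by
      have hlen : 1 < (phiL (u k)).length := by rw [hu1]; decide
      rw [phiSeq_block u hlen, hu1]; rfl
    have hval_d : phiInf (Pz u k + 1) = 1 := by
      have : Pz phiInf (k+1) = Pz phiInf k + 1 := by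
        rw [Pz_succ, hd0]; rfl
      rw [← phiSeq_phiInf, hP, ← this, phiSeq_blockStart]
    omega
  · -- here u k < phiInf k, so u k = 0, phiInf k = 1
    rw [if_neg hp] at hc
    have hd1 : phiInf k = 1 := by have := phiInf_binary k; omega
    have hu0 : u k = 0 := by omega
    refine ⟨Pz u k + 1, hagree, ?_⟩
    have hj : Even (Pz u k + 1) := by
      rw [Nat.even_add_one, Pz_parity]; exact hp
    rw [if_pos hj]
    have hval_u : phiSeq u (Pz u k + 1) = 1 := by
      have : Pz u (k+1) = Pz u k + 1 := by rw [Pz_succ, hu0]; rfl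
      rw [← this, phiSeq_blockStart]
    have hval_d : phiInf (Pz u k + 1) = 0 := by
      have hlen : 1 < (phiL (phiInf k)).length := by rw [hd1]; decide
      rw [← phiSeq_phiInf, hP, phiSeq_block phiInf hlen, hd1]; rfl
    omega

lemma altLe_of_altLe_phiSeq {u : ℕ → ℕ} (hu : ∀ i, u i ≤ 1)
    (h : altLe phiInf (phiSeq u)) : altLe phiInf u := by
  by_contra hcon
  have h1 := altLt_of_not_altLe hcon
  have h2 := altLt_phiSeq hu h1
  rcases h with he | hl
  · rw [← he] at h2; exact altLt_irrefl _ h2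
  · exact altLt_asymm hl h2

/-! ### Section 6 : membership facts and desubstitution -/

lemma shift_shift (x : ℕ → ℕ) (a b : ℕ) :
    shiftSeq (shiftSeq x a) b = shiftSeq x (a + b) := by
  funext i; simp [shiftSeq, Nat.add_assoc]

lemma mem_shift {x : ℕ → ℕ} (hx : x ∈ LyndonSystem phiInf) (k : ℕ) :
    shiftSeq x k ∈ LyndonSystem phiInf := by
  refine ⟨fun i => hx.1 (k + i), fun j => ?_⟩
  rw [shift_shift]
  exact hx.2 (k + j)

lemma zero_mem : (fun _ : ℕ => 0) ∈ LyndonSystem phiInf := by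
  refine ⟨fun i => by rw [phiInf_0]; exact Nat.zero_le 1,
    fun k => Or.inr ⟨0, fun i hi => absurd hi (by omega), ?_⟩⟩
  rw [if_pos (by decide)]
  show shiftSeq (fun _ : ℕ => 0) k 0 < phiInf 0
  rw [phiInf_0]
  exact Nat.zero_lt_one

lemma mem_binary {x : ℕ → ℕ} (hx : x ∈ LyndonSystem phiInf) (i : ℕ) : x i ≤ 1 := by
  have := hx.1 i; rwa [phiInf_0] at this

/-- forbidden factors `101` and `1000`. -/
lemma forb {y : ℕ → ℕ} (hy : y ∈ LyndonSystem phiInf) (j : ℕ)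
    (h1 : y j = 1) (h2 : y (j+1) = 0) : y (j+2) = 0 ∧ y (j+3) = 1 := by
  have hb := mem_binary hy
  have hs := hy.2 j
  have hsv : ∀ i, shiftSeq y j i = y (j + i) := fun i => rfl
  have key2 : y (j+2) = 0 := by
    by_contra hc
    have hc1 : y (j+2) = 1 := by have := hb (j+2); omega
    rcases hs with he | ⟨k, hag, hcond⟩
    · have := congrFun he 2
      rw [hsv 2, phiInf_2] at this; omega
    · match k with
      | 0 => rw [if_pos (by decide)] at hcond; rw [hsv 0, Nat.add_zero, phiInf_0] at hcond; omega
      | 1 => rw [if_neg (by decide)] at hcond; rw [hsv 1, phiInf_1] at hcond; omega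
      | 2 => rw [if_pos (by decide)] at hcond; rw [hsv 2, phiInf_2] at hcond; omega
      | (n+3) =>
        have := hag 2 (by omega)
        rw [hsv 2, phiInf_2] at this; omega
  refine ⟨key2, ?_⟩
  by_contra hc
  have hc0 : y (j+3) = 0 := by have := hb (j+3); omega
  rcases hs with he | ⟨k, hag, hcond⟩
  · have := congrFun he 3
    rw [hsv 3, phiInf_3] at this; omega
  · match k with
    | 0 => rw [if_pos (by decide)] at hcond; rw [hsv 0, Nat.add_zero, phiInf_0] at hcond; omega
    | 1 => rw [if_neg (by decide)] at hcond; rw [hsv 1, phiInf_1] at hcond; omega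
    | 2 => rw [if_pos (by decide)] at hcond; rw [hsv 2, phiInf_2] at hcond; omega
    | 3 => rw [if_neg (by decide)] at hcond; rw [hsv 3, phiInf_3] at hcond; omega
    | (n+4) =>
      have := hag 3 (by omega)
      rw [hsv 3, phiInf_3] at this; omega

/-- block start positions for the desubstitution of `y`. -/
def dsP (y : ℕ → ℕ) : ℕ → ℕ
  | 0 => 0
  | k+1 => dsP y k + (if y (dsP y k + 1) = 1 then 1 else 3)

/-- the desubstituted sequence. -/
def dsZ (y : ℕ → ℕ) (k : ℕ) : ℕ := if y (dsP y k + 1) = 1 then 0 else 1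

lemma desub {y : ℕ → ℕ} (hy : y ∈ LyndonSystem phiInf) (h0 : y 0 = 1) :
    ∃ z ∈ LyndonSystem phiInf, ∀ i, y i = phiSeq z i := by
  have hb := mem_binary hy
  set z := dsZ y with hz
  -- invariant : block starts carry the letter 1
  have inv : ∀ k, y (dsP y k) = 1 := by
    intro k
    induction k with
    | zero => exact h0
    | succ k ih =>
      show y (dsP y k + (if y (dsP y k + 1) = 1 then 1 else 3)) = 1
      by_cases hcase : y (dsP y k + 1) = 1
      · rw [if_pos hcase]; exact hcase
      · rw [if_neg hcase]
        have h2 : y (dsP y k + 1) = 0 := by have := hb (dsP y k + 1); omega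
        exact (forb hy (dsP y k) ih h2).2
  have hPz : ∀ k, Pz z k = dsP y k := by
    intro k
    induction k with
    | zero => rfl
    | succ k ih =>
      rw [Pz_succ, ih]
      show dsP y k + (phiL (dsZ y k)).length = dsP y k + _
      unfold dsZ phiL
      by_cases hcase : y (dsP y k + 1) = 1
      · rw [if_pos hcase]; rw [if_pos hcase]; rfl
      · rw [if_neg hcase]; rw [if_neg hcase]; rfl
  have gaps : ∀ k, dsP y (k+1) = dsP y k + 1 ∨
      (dsP y (k+1) = dsP y k + 3 ∧ y (dsP y k + 1) = 0 ∧ y (dsP y k + 2) = 0) := by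
    intro k
    by_cases hcase : y (dsP y k + 1) = 1
    · left; show dsP y k + _ = _; rw [if_pos hcase]
    · right
      have h2 : y (dsP y k + 1) = 0 := by have := hb (dsP y k + 1); omega
      refine ⟨by show dsP y k + _ = _; rw [if_neg hcase], h2,
        (forb hy (dsP y k) (inv k) h2).1⟩
  have locate : ∀ i, ∃ k, dsP y k ≤ i ∧ i < dsP y (k+1) := by
    intro i
    induction i with
    | zero =>
      refine ⟨0, le_refl _, ?_⟩
      rcases gaps 0 with h | ⟨h, _⟩ <;> show 0 < _ <;> omega
    | succ i ih =>
      obtain ⟨k, hk1, hk2⟩ := ih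
      rcases Nat.lt_or_ge (i+1) (dsP y (k+1)) with h | h
      · exact ⟨k, by omega, h⟩
      · refine ⟨k+1, by omega, ?_⟩
        rcases gaps (k+1) with h' | ⟨h', _⟩ <;> omega
  have hmatch : ∀ i, y i = phiSeq z i := by
    intro i
    obtain ⟨k, hk1, hk2⟩ := locate i
    have hstart : phiSeq z (dsP y k) = 1 := by
      rw [← hPz k]; exact phiSeq_blockStart z k
    rcases gaps k with h | ⟨h, ha, hb2⟩
    · have hie : i = dsP y k := by omega
      rw [hie, hstart]
      exact inv k
    · have hz1 : z k = 1 := by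
        show dsZ y k = 1
        unfold dsZ; rw [if_neg (by omega)]
      have hlen : (phiL (z k)).length = 3 := by rw [hz1]; rfl
      have hb1 : phiSeq z (dsP y k + 1) = 0 := by
        rw [← hPz k, phiSeq_block z (o := 1) (by rw [hlen]; omega), hz1]
        rfl
      have hb2' : phiSeq z (dsP y k + 2) = 0 := by
        rw [← hPz k, phiSeq_block z (o := 2) (by rw [hlen]; omega), hz1]
        rfl
      rcases (show i = dsP y k ∨ i = dsP y k + 1 ∨ i = dsP y k + 2 by omega) with h' | h' | h'
      · rw [h', hstart]; exact inv k
      · rw [h', hb1]; exact ha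
      · rw [h', hb2']; exact hb2
  refine ⟨z, ⟨?_, ?_⟩, hmatch⟩
  · intro i
    rw [phiInf_0]
    show dsZ y i ≤ 1
    unfold dsZ; split <;> omega
  · intro k
    have heq : shiftSeq y (Pz z k) = phiSeq (shiftSeq z k) := by
      funext i
      rw [phiSeq_shift, shiftSeq, ← hmatch]
    apply altLe_of_altLe_phiSeq
    · intro i
      show z (k + i) ≤ 1
      show dsZ y (k + i) ≤ 1
      unfold dsZ; split <;> omega
    · rw [← heq]
      exact hy.2 (Pz z k)

/-! ### Section 7 : decomposition of factors -/

lemma peel (z : ℕ → ℕ) (hz : ∀ i, z i ≤ 1) :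
    ∀ m j, ∃ v p : List ℕ,
      v = (List.range v.length).map (fun i => z (j + i)) ∧
      (p = [] ∨ p = [1] ∨ p = [1, 0]) ∧
      (List.range m).map (fun i => phiSeq z (Pz z j + i)) = phiW v ++ p := by
  intro m
  induction m using Nat.strong_induction_on with
  | _ m ih =>
    intro j
    rcases Nat.eq_zero_or_pos m with hm | hm
    · subst hm
      exact ⟨[], [], by simp, Or.inl rfl, by simp [phiW]⟩
    rcases Nat.lt_or_ge m (phiL (z j)).length with hlt | hge
    · -- partial first block : here `z j = 1` and `m ∈ {1, 2}`
      have hzj : z j = 1 := by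
        by_contra hc
        have h2 := hz j
        have h0 : z j = 0 := by omega
        rw [phiL_length, if_pos h0] at hlt
        omega
      have hlen3 : (phiL (z j)).length = 3 := by rw [hzj]; rfl
      have hS : phiSeq z (Pz z j + 0) = 1 := by
        rw [Nat.add_zero]; exact phiSeq_blockStart z j
      rw [hlen3] at hlt
      rcases (show m = 1 ∨ m = 2 by omega) with hm' | hm'
      · subst hm'
        refine ⟨[], [1], by simp, Or.inr (Or.inl rfl), ?_⟩
        rw [show phiW [] ++ [1] = [1] from rfl]
        rw [show List.range 1 = [0] from rfl, List.map_cons, List.map_nil, hS]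
      · subst hm'
        refine ⟨[], [1, 0], by simp, Or.inr (Or.inr rfl), ?_⟩
        have hS1 : phiSeq z (Pz z j + 1) = 0 := by
          rw [phiSeq_block z (o := 1) (by rw [hlen3]; omega), hzj]; rfl
        rw [show phiW [] ++ [1, 0] = [1, 0] from rfl]
        rw [show List.range 2 = [0, 1] from rfl]
        rw [List.map_cons, List.map_cons, List.map_nil, hS, hS1]
    · -- whole first block followed by the rest
      set b := (phiL (z j)).length with hb
      have hbpos : 0 < b := phiL_length_pos (z j)
      obtain ⟨v', p, hv', hp, hw⟩ := ih (m - b) (by omega) (j + 1)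
      refine ⟨z j :: v', p, ?_, hp, ?_⟩
      · rw [List.length_cons, List.range_succ_eq_map, List.map_cons]
        congr 1
        conv_lhs => rw [hv']
        rw [List.map_map]
        apply List.map_congr_left
        intro i _
        show z (j + 1 + i) = z (j + (i + 1))
        congr 1
        omega
      · rw [show m = b + (m - b) by omega, List.range_add, List.map_append, List.map_map]
        have hfirst : (List.range b).map (fun i => phiSeq z (Pz z j + i)) = phiL (z j) := by
          apply List.ext_getElem
          · rw [List.length_map, List.length_range]
          · intro i h1 h2
            rw [List.getElem_map, List.getElem_range]
            rw [List.length_map, List.length_range] at h1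
            rw [phiSeq_block z h1, List.getD_eq_getElem _ 0 h1]
        have hsecond : (List.range (m - b)).map
            ((fun i => phiSeq z (Pz z j + i)) ∘ (fun x => b + x)) =
            (List.range (m - b)).map (fun i => phiSeq z (Pz z (j+1) + i)) := by
          apply List.map_congr_left
          intro i _
          show phiSeq z (Pz z j + (b + i)) = phiSeq z (Pz z (j+1) + i)
          rw [Pz_succ, ← hb, Nat.add_assoc]
        rw [hfirst, hsecond, hw, phiW_cons, List.append_assoc]

lemma factor_binary {w : List ℕ} (hw : w ∈ LyndonLang phiInf) : ∀ a ∈ w, a ≤ 1 := by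
  obtain ⟨x, hx, k, hwx⟩ := hw
  intro a ha
  rw [hwx] at ha
  rw [List.mem_map] at ha
  obtain ⟨i, _, rfl⟩ := ha
  exact mem_binary hx _

lemma nil_mem_lang : ([] : List ℕ) ∈ LyndonLang phiInf :=
  ⟨(fun _ => 0), zero_mem, 0, by simp⟩

lemma factor_decomp {w : List ℕ} (hw : w ∈ LyndonLang phiInf) :
    ∃ a : ℕ, ∃ v p : List ℕ, v ∈ LyndonLang phiInf ∧ (p = [] ∨ p = [1] ∨ p = [1, 0]) ∧
      w = List.replicate a 0 ++ phiW v ++ p ∧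
      3 * (v.length + 2 * v.count 1) ≤ 2 * (w.length + 2 * w.count 1) := by
  obtain ⟨x, hx, k, hwx⟩ := hw
  set n := w.length with hn
  by_cases hall : ∀ i < n, x (k + i) = 0
  · -- all-zero word
    refine ⟨n, [], [], nil_mem_lang, Or.inl rfl, ?_, by simp⟩
    rw [show phiW [] = [] from rfl, List.append_nil, List.append_nil, hwx]
    apply List.ext_getElem
    · simp [← hn]
    · intro i h1 h2
      rw [List.getElem_map, List.getElem_range, List.getElem_replicate]
      rw [List.length_map, List.length_range] at h1
      exact hall i (by omega)
  · push_neg at hall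
    have hex : ∃ i, i < n ∧ x (k + i) ≠ 0 := by
      obtain ⟨i, h1, h2⟩ := hall; exact ⟨i, h1, h2⟩
    classical
    obtain ⟨a, ⟨han, haz⟩, hamin⟩ :
        ∃ a : ℕ, (a < n ∧ x (k + a) ≠ 0) ∧ ∀ i < a, ¬(i < n ∧ x (k + i) ≠ 0) :=
      ⟨Nat.find hex, Nat.find_spec hex, fun i hi => Nat.find_min hex hi⟩
    have hmin : ∀ i < a, x (k + i) = 0 := by
      intro i hi
      by_contra hc
      rcases Nat.lt_or_ge i n with h' | h'
      · exact hamin i hi ⟨h', hc⟩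
      · omega
    have hxa : x (k + a) = 1 := by have := mem_binary hx (k + a); omega
    have hy : shiftSeq x (k + a) ∈ LyndonSystem phiInf := mem_shift hx (k + a)
    have hy0 : shiftSeq x (k + a) 0 = 1 := by
      show x (k + a + 0) = 1; rwa [Nat.add_zero]
    obtain ⟨z, hzmem, hmatch⟩ := desub hy hy0
    have hzb : ∀ i, z i ≤ 1 := mem_binary hzmem
    obtain ⟨v, p, hv, hp, hword⟩ := peel z hzb (n - a) 0
    have hvmem : v ∈ LyndonLang phiInf := ⟨z, hzmem, 0, hv⟩
    have hkey : (List.range (n - a)).map (fun i => phiSeq z i) = phiW v ++ p := by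
      rw [← hword]
      apply List.map_congr_left
      intro i _
      rw [Pz_zero, Nat.zero_add]
    have hwd : w = List.replicate a 0 ++ phiW v ++ p := by
      rw [List.append_assoc, ← hkey, hwx]
      apply List.ext_getElem
      · rw [List.length_map, List.length_range, List.length_append, List.length_replicate,
          List.length_map, List.length_range]
        omega
      · intro i h1 h2
        rw [List.length_map, List.length_range] at h1
        rw [List.getElem_map, List.getElem_range]
        rcases Nat.lt_or_ge i a with h' | h'
        · rw [List.getElem_append_left (by rw [List.length_replicate]; exact h')]
          rw [List.getElem_replicate]
          exact hmin i h'
        · rw [List.getElem_append_right (by rw [List.length_replicate]; exact h')]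
          rw [List.getElem_map, List.getElem_range, List.length_replicate]
          rw [← hmatch (i - a)]
          show x (k + i) = x (k + a + (i - a))
          congr 1
          omega
    refine ⟨a, v, p, hvmem, hp, hwd, ?_⟩
    have hvb : ∀ b ∈ v, b ≤ 1 := by
      intro b hb
      rw [hv] at hb
      rw [List.mem_map] at hb
      obtain ⟨i, _, rfl⟩ := hb
      exact hzb _
    have hlen : w.length = a + (v.length + 2 * v.count 1) + p.length := by
      rw [hwd, List.length_append, List.length_append, List.length_replicate,
        phiW_length v hvb]
    have hcount : v.length ≤ w.count 1 := by
      rw [hwd, List.count_append, List.count_append, ← phiW_count_one v]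
      omega
    have hc : v.count 1 ≤ v.length := List.count_le_length
    omega

/-! ### Section 8 : counting -/

/-- words of the language of weight (`length + 2·(number of ones)`) at most `N`. -/
def muSet (N : ℕ) : Set (List ℕ) :=
  {w | w ∈ LyndonLang phiInf ∧ w.length + 2 * w.count 1 ≤ N}

lemma finite_binary_words (N : ℕ) :
    {w : List ℕ | w.length ≤ N ∧ ∀ a ∈ w, a ≤ 1}.Finite := by
  induction N with
  | zero =>
    apply Set.Finite.subset (Set.finite_singleton ([] : List ℕ))
    rintro w ⟨hl, -⟩
    rw [Nat.le_zero, List.length_eq_zero_iff] at hl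
    simp [hl]
  | succ N ih =>
    apply Set.Finite.subset
      (((ih.image (List.cons 0)).union (ih.image (List.cons 1))).union
        (Set.finite_singleton ([] : List ℕ)))
    rintro w ⟨hl, hb⟩
    match w with
    | [] => exact Or.inr rfl
    | a :: t =>
      left
      have ha : a ≤ 1 := hb a List.mem_cons_self
      have ht : t ∈ {w : List ℕ | w.length ≤ N ∧ ∀ a ∈ w, a ≤ 1} :=
        ⟨by simp at hl; omega, fun b hbt => hb b (List.mem_cons_of_mem _ hbt)⟩
      rcases (show a = 0 ∨ a = 1 by omega) with rfl | rfl
      · exact Or.inl ⟨t, ht, rfl⟩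
      · exact Or.inr ⟨t, ht, rfl⟩

lemma muSet_finite (N : ℕ) : (muSet N).Finite := by
  apply Set.Finite.subset (finite_binary_words N)
  rintro w ⟨hw, hmu⟩
  exact ⟨by omega, factor_binary hw⟩

/-- the three possible partial blocks. -/
def pSet : Finset (List ℕ) := {[], [1], [1, 0]}

lemma muSet_card_rec (N : ℕ) :
    (muSet N).ncard ≤ 3 * (N + 1) * (muSet (2 * N / 3)).ncard := by
  classical
  set T := (muSet_finite (2 * N / 3)).toFinset with hT
  set F : ℕ × List ℕ × List ℕ → List ℕ :=
    (fun t => List.replicate t.1 0 ++ phiW t.2.2 ++ t.2.1) with hF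
  set D : Finset (ℕ × List ℕ × List ℕ) := (Finset.range (N+1)) ×ˢ pSet ×ˢ T with hD
  have hsub : muSet N ⊆ ↑(D.image F) := by
    rintro w ⟨hw, hmu⟩
    obtain ⟨a, v, p, hv, hp, hwd, hineq⟩ := factor_decomp hw
    have hvmu : v.length + 2 * v.count 1 ≤ 2 * N / 3 := by
      rw [Nat.le_div_iff_mul_le (by norm_num)]
      omega
    have haN : a ≤ N := by
      have : a ≤ w.length := by rw [hwd]; simp
      omega
    rw [Finset.coe_image]
    refine ⟨(a, p, v), ?_, hwd.symm⟩
    rw [hD]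
    simp only [Finset.coe_product, Set.mem_prod, Finset.mem_coe]
    refine ⟨Finset.mem_range.mpr (by omega), ?_, ?_⟩
    · rcases hp with rfl | rfl | rfl <;> decide
    · rw [hT, Set.Finite.mem_toFinset]
      exact ⟨hv, hvmu⟩
  calc (muSet N).ncard ≤ (↑(D.image F) : Set (List ℕ)).ncard :=
        Set.ncard_le_ncard hsub (D.image F).finite_toSet
    _ = (D.image F).card := Set.ncard_coe_finset _
    _ ≤ D.card := Finset.card_image_le
    _ = (N + 1) * (3 * T.card) := by
        rw [hD, Finset.card_product, Finset.card_product, Finset.card_range]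
        rfl
    _ = 3 * (N + 1) * (muSet (2 * N / 3)).ncard := by
        rw [hT, Set.ncard_eq_toFinset_card _ (muSet_finite (2 * N / 3))]
        ring

/-- iteration count. -/
def Kfn : ℕ → ℕ
  | 0 => 0
  | (n+1) => Kfn (2 * (n+1) / 3) + 1
  decreasing_by omega

lemma Kfn_succ (n : ℕ) : Kfn (n+1) = Kfn (2 * (n+1) / 3) + 1 := by rw [Kfn]

lemma muSet_card_bound : ∀ N, (muSet N).ncard ≤ (3 * N + 3) ^ Kfn N := by
  intro N
  induction N using Nat.strong_induction_on with
  | _ N ih =>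
    match N with
    | 0 =>
      have h1 : muSet 0 ⊆ {([] : List ℕ)} := by
        rintro w ⟨-, hmu⟩
        have : w.length = 0 := by omega
        simp [List.length_eq_zero_iff.mp this]
      calc (muSet 0).ncard ≤ ({([] : List ℕ)} : Set (List ℕ)).ncard :=
            Set.ncard_le_ncard h1 (Set.finite_singleton _)
        _ = 1 := Set.ncard_singleton _
        _ ≤ _ := Nat.one_le_pow' _ _  -- (3*0+3)^K ≥ 1 ?
    | (n+1) =>
      have hM : 2 * (n+1) / 3 < n + 1 := by omega
      calc (muSet (n+1)).ncard
          ≤ 3 * ((n+1) + 1) * (muSet (2 * (n+1) / 3)).ncard := muSet_card_rec (n+1)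
        _ ≤ 3 * ((n+1) + 1) * (3 * (2 * (n+1) / 3) + 3) ^ Kfn (2 * (n+1) / 3) := by
            exact Nat.mul_le_mul_left _ (ih _ hM)
        _ ≤ (3 * (n+1) + 3) * (3 * (n+1) + 3) ^ Kfn (2 * (n+1) / 3) := by
            apply Nat.mul_le_mul (by omega)
            exact Nat.pow_le_pow_left (by omega) _
        _ = (3 * (n+1) + 3) ^ (Kfn (2 * (n+1) / 3) + 1) := by
            rw [pow_succ]; ring
        _ = (3 * (n+1) + 3) ^ Kfn (n+1) := by rw [Kfn_succ]

lemma Kfn_le : ∀ N m, N * 2 ^ m < 3 ^ m → Kfn N ≤ m := by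
  intro N
  induction N using Nat.strong_induction_on with
  | _ N ih =>
    intro m hm
    match N with
    | 0 => rw [Kfn]; exact Nat.zero_le m
    | (n+1) =>
      match m with
      | 0 => simp at hm
      | (m'+1) =>
        have hM : 2 * (n+1) / 3 < n + 1 := by omega
        have h3 : 3 * (2 * (n+1) / 3) ≤ 2 * (n+1) := by omega
        have step : 3 * ((2 * (n+1) / 3) * 2 ^ m') ≤ 2 * (n+1) * 2 ^ m' := by
          rw [← Nat.mul_assoc]
          exact Nat.mul_le_mul_right _ h3
        have hyp' : 2 * (n+1) * 2 ^ m' < 3 * 3 ^ m' := by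
          calc 2 * (n+1) * 2 ^ m' = (n+1) * 2 ^ (m'+1) := by ring
            _ < 3 ^ (m'+1) := hm
            _ = 3 * 3 ^ m' := by ring
        have hlt : (2 * (n+1) / 3) * 2 ^ m' < 3 ^ m' := by omega
        rw [Kfn_succ]
        exact Nat.add_le_add_right (ih _ hM m' hlt) 1

lemma Kfn_le_log (N : ℕ) : Kfn N ≤ 2 * (Nat.log 2 N + 1) := by
  set t := Nat.log 2 N + 1 with ht
  apply Kfn_le
  have hNt : N < 2 ^ t := Nat.lt_pow_succ_log_self (by norm_num) N
  have e2 : (2:ℕ) ^ (2 * t) = 4 ^ t := by rw [pow_mul]; norm_num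
  have e3 : (3:ℕ) ^ (2 * t) = 9 ^ t := by rw [pow_mul]; norm_num
  rw [e2, e3]
  calc N * 4 ^ t < 2 ^ t * 4 ^ t :=
        (Nat.mul_lt_mul_right (by positivity : 0 < 4 ^ t)).mpr hNt
    _ = 8 ^ t := by rw [← Nat.mul_pow]
    _ ≤ 9 ^ t := Nat.pow_le_pow_left (by norm_num) _

lemma Hword_le (n : ℕ) :
    Hword phiInf n ≤ (9 * n + 3) ^ (2 * (Nat.log 2 (3 * n) + 1)) := by
  have hsub : {w : List ℕ | w ∈ LyndonLang phiInf ∧ w.length = n} ⊆ muSet (3 * n) := by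
    rintro w ⟨hw, hl⟩
    have : w.count 1 ≤ w.length := List.count_le_length
    exact ⟨hw, by omega⟩
  calc Hword phiInf n ≤ (muSet (3 * n)).ncard :=
        Set.ncard_le_ncard hsub (muSet_finite _)
    _ ≤ (3 * (3 * n) + 3) ^ Kfn (3 * n) := muSet_card_bound _
    _ ≤ (9 * n + 3) ^ (2 * (Nat.log 2 (3 * n) + 1)) := by
        rw [show 3 * (3 * n) + 3 = 9 * n + 3 by ring]
        exact Nat.pow_le_pow_right (by omega) (Kfn_le_log _)

lemma Hword_pos (n : ℕ) : 1 ≤ Hword phiInf n := by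
  have hmem : List.replicate n 0 ∈
      {w : List ℕ | w ∈ LyndonLang phiInf ∧ w.length = n} := by
    refine ⟨⟨(fun _ => 0), zero_mem, 0, ?_⟩, List.length_replicate⟩
    apply List.ext_getElem
    · simp
    · intro i h1 h2
      simp
  have hfin : {w : List ℕ | w ∈ LyndonLang phiInf ∧ w.length = n}.Finite := by
    apply Set.Finite.subset (finite_binary_words n)
    rintro w ⟨hw, hl⟩
    exact ⟨by omega, factor_binary hw⟩
  have h := Set.ncard_pos hfin |>.mpr ⟨_, hmem⟩
  unfold Hword
  omega

/-! ### Section 9 : the limit -/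

lemma log_le_cuberoot {x : ℝ} (hx : 1 ≤ x) : Real.log x ≤ 3 * x ^ ((1:ℝ)/3) := by
  have hx0 : (0:ℝ) < x := by linarith
  have h1 : Real.log (x ^ ((1:ℝ)/3)) = (1/3) * Real.log x := Real.log_rpow hx0 _
  have h2 : Real.log (x ^ ((1:ℝ)/3)) ≤ x ^ ((1:ℝ)/3) - 1 :=
    Real.log_le_sub_one_of_pos (Real.rpow_pos_of_pos hx0 _)
  have h3 : (0:ℝ) < x ^ ((1:ℝ)/3) := Real.rpow_pos_of_pos hx0 _
  rw [h1] at h2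
  linarith

lemma entropy_upper (n : ℕ) (hn : 1 ≤ n) :
    Real.log (Hword phiInf n) / n ≤ 648 * (n:ℝ) ^ (-(1/3) : ℝ) := by
  have hn0 : (0:ℝ) < n := by exact_mod_cast hn
  have hn1 : (1:ℝ) ≤ n := by exact_mod_cast hn
  set X : ℝ := 9 * (n:ℝ) + 3 with hX
  have hx1 : (1:ℝ) ≤ X := by rw [hX]; nlinarith
  have hx0 : (0:ℝ) < X := by linarith
  have hlogX0 : 0 ≤ Real.log X := Real.log_nonneg hx1
  have hlogX1 : 1 ≤ Real.log X := by
    have h12 : Real.exp 1 ≤ X := by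
      have := Real.exp_one_lt_d9
      rw [hX]; nlinarith
    calc (1:ℝ) = Real.log (Real.exp 1) := (Real.log_exp 1).symm
      _ ≤ Real.log X := Real.log_le_log (Real.exp_pos 1) h12
  set E : ℕ := 2 * (Nat.log 2 (3 * n) + 1) with hE
  -- step 1 : log Hword ≤ E log X
  have h1 : Real.log (Hword phiInf n) ≤ (E:ℝ) * Real.log X := by
    calc Real.log (Hword phiInf n) ≤ Real.log (((9 * n + 3) ^ E : ℕ) : ℝ) := by
          apply Real.log_le_log
          · exact_mod_cast Hword_pos n
          · exact_mod_cast Hword_le n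
      _ = (E:ℝ) * Real.log X := by
          push_cast
          rw [Real.log_pow]
  -- step 2 : E ≤ 6 log X
  have hL : (Nat.log 2 (3 * n) : ℝ) * Real.log 2 ≤ Real.log X := by
    rw [← Real.log_pow]
    apply Real.log_le_log (by positivity)
    have hpow : (2:ℕ) ^ Nat.log 2 (3 * n) ≤ 3 * n := Nat.pow_log_le_self 2 (by omega)
    calc ((2:ℝ) ^ Nat.log 2 (3 * n)) = (((2:ℕ) ^ Nat.log 2 (3 * n) : ℕ) : ℝ) := by push_cast; ring
      _ ≤ ((3 * n : ℕ) : ℝ) := by exact_mod_cast hpow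
      _ ≤ X := by push_cast; rw [hX]; nlinarith
  have hlog2 : (1:ℝ)/2 ≤ Real.log 2 := by
    have := Real.log_two_gt_d9; linarith
  have hLX : (Nat.log 2 (3 * n) : ℝ) ≤ 2 * Real.log X := by
    have hLnn : (0:ℝ) ≤ (Nat.log 2 (3 * n) : ℝ) := Nat.cast_nonneg _
    nlinarith
  have h2 : (E:ℝ) ≤ 6 * Real.log X := by
    rw [hE]; push_cast
    linarith
  -- step 3 : log X ≤ 3 X^{1/3}
  have h3 : Real.log X ≤ 3 * X ^ ((1:ℝ)/3) := log_le_cuberoot hx1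
  have hXc : (0:ℝ) < X ^ ((1:ℝ)/3) := Real.rpow_pos_of_pos hx0 _
  -- combine : log Hword ≤ 54 X^{2/3}
  have h4 : Real.log (Hword phiInf n) ≤ 54 * X ^ ((2:ℝ)/3) := by
    have hXX : X ^ ((1:ℝ)/3) * X ^ ((1:ℝ)/3) = X ^ ((2:ℝ)/3) := by
      rw [← Real.rpow_add hx0]; norm_num
    have := mul_le_mul h2 h3 hlogX0 (by linarith : (0:ℝ) ≤ 6 * Real.log X)
    calc Real.log (Hword phiInf n) ≤ (E:ℝ) * Real.log X := h1
      _ ≤ (6 * Real.log X) * (3 * X ^ ((1:ℝ)/3)) := this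
      _ ≤ (6 * (3 * X ^ ((1:ℝ)/3))) * (3 * X ^ ((1:ℝ)/3)) := by nlinarith
      _ = 54 * (X ^ ((1:ℝ)/3) * X ^ ((1:ℝ)/3)) := by ring
      _ = 54 * X ^ ((2:ℝ)/3) := by rw [hXX]
  -- X ≤ 12 n hence X^{2/3} ≤ 12 n^{2/3}
  have h5 : X ^ ((2:ℝ)/3) ≤ 12 * (n:ℝ) ^ ((2:ℝ)/3) := by
    have hX12 : X ≤ 12 * (n:ℝ) := by rw [hX]; linarith
    calc X ^ ((2:ℝ)/3) ≤ (12 * (n:ℝ)) ^ ((2:ℝ)/3) :=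
          Real.rpow_le_rpow (by linarith) hX12 (by norm_num)
      _ = (12:ℝ) ^ ((2:ℝ)/3) * (n:ℝ) ^ ((2:ℝ)/3) :=
          Real.mul_rpow (by norm_num) (by positivity)
      _ ≤ 12 * (n:ℝ) ^ ((2:ℝ)/3) := by
          have h12 : (12:ℝ) ^ ((2:ℝ)/3) ≤ (12:ℝ) ^ ((1:ℝ)) :=
            Real.rpow_le_rpow_of_exponent_le (by norm_num) (by norm_num)
          rw [Real.rpow_one] at h12
          have : (0:ℝ) ≤ (n:ℝ) ^ ((2:ℝ)/3) := by positivity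
          nlinarith
  -- divide by n
  have h6 : Real.log (Hword phiInf n) ≤ 648 * (n:ℝ) ^ ((2:ℝ)/3) := by linarith
  rw [div_le_iff₀ hn0]
  calc Real.log (Hword phiInf n) ≤ 648 * (n:ℝ) ^ ((2:ℝ)/3) := h6
    _ = 648 * (n:ℝ) ^ (-(1/3) : ℝ) * n := by
        have hid : (n:ℝ) ^ (-(1/3) : ℝ) * (n:ℝ) ^ ((1:ℝ)) = (n:ℝ) ^ ((2:ℝ)/3) := by
          rw [← Real.rpow_add hn0]; norm_num
        rw [mul_assoc, ← hid, Real.rpow_one]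

theorem stmt9_aux : EntropyIs phiInf 0 := by
  unfold EntropyIs
  apply tendsto_of_tendsto_of_tendsto_of_le_of_le' (g := fun _ => (0:ℝ))
    (h := fun n : ℕ => 648 * (n:ℝ) ^ (-(1/3) : ℝ))
  · exact tendsto_const_nhds
  · have hbase : Filter.Tendsto (fun x : ℝ => x ^ (-(1/3) : ℝ)) Filter.atTop (nhds 0) :=
      tendsto_rpow_neg_atTop (by norm_num)
    have := (hbase.comp tendsto_natCast_atTop_atTop).const_mul (648:ℝ)
    simpa using this
  · apply Filter.Eventually.of_forall
    intro n
    apply div_nonneg _ (Nat.cast_nonneg n)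
    apply Real.log_nonneg
    exact_mod_cast Hword_pos n
  · rw [Filter.eventually_atTop]
    exact ⟨1, fun n hn => entropy_upper n hn⟩


/-- Proposition 5 (2): the Lyndon system `M(φ^∞(1))` has zero entropy. -/
theorem stmt9 : EntropyIs phiInf 0 := stmt9_aux
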